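/- (Theorem 21-1, coflow-level scheduling with release times and weight ratio R.) Assume the coflow-level dual data with κ = 1/2 and a = 1, a real R ≥ 1, hypotheses (A'), (B'), (C') of Lemma 23, the relaxed tightness (D_R): w_k ≤ R·( α_k + Σ_{i∈I} Σ_{k'=k}^n βI(i,k')·LI(i,k) + Σ_{j∈J} Σ_{k'=k}^n βJ(j,k')·LJ(j,k) ) for every k, and the weak-duality bound (E): Σ_k α_k·r_k + Σ_{i∈I} Σ_k βI(i,k)·FI(i,k) + Σ_{j∈J} Σ_k βJ(j,k)·FJ(j,k) ≤ OPT, where OPT ≥ 0 is the optimal total weighted completion time. Then Σ_k w_k·C_k ≤ (4Rχ·m + R)·OPT. -/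
import Mathlib


/-- Theorem 21-1 (coflow-level scheduling with release times, weight ratio R): ratio 4Rχm + R. -/
theorem coflow_level_with_release_times_ratio
    -- coflow-level dual data
    (n : ℕ) (hn : 1 ≤ n)
    (I J : Type*) [Fintype I] [Fintype J] [Nonempty I] [Nonempty J]
    (m χ : ℝ) (hm : 2 ≤ m) (hχ : 1 ≤ χ)
    (w r C α DI DJ : Fin n → ℝ)
    (βI LI FI : I → Fin n → ℝ) (βJ LJ FJ : J → Fin n → ℝ)
    (hw : ∀ k, 0 ≤ w k) (hr : ∀ k, 0 ≤ r k) (hC : ∀ k, 0 ≤ C k)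
    (hα : ∀ k, 0 ≤ α k)
    (hβI : ∀ i k, 0 ≤ βI i k) (hβJ : ∀ j k, 0 ≤ βJ j k)
    (hLI : ∀ i k, 0 ≤ LI i k) (hLJ : ∀ j k, 0 ≤ LJ j k)
    (hDI : ∀ k, 0 ≤ DI k) (hDJ : ∀ k, 0 ≤ DJ k)
    (hFI : ∀ i k, 0 ≤ FI i k) (hFJ : ∀ j k, 0 ≤ FJ j k)
    (hDImono : Monotone DI) (hDJmono : Monotone DJ)
    (hcumI : ∀ i k, ∑ k' ∈ Finset.Iic k, LI i k' ≤ DI k)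
    (hcumJ : ∀ j k, ∑ k' ∈ Finset.Iic k, LJ j k' ≤ DJ k)
    (R : ℝ) (hR : 1 ≤ R)
    (OPT : ℝ) (hOPT : 0 ≤ OPT)
    -- (A') with κ = 1/2
    (hA : ∀ k, 0 < α k →
      DI k ≤ 2 * m * r k ∧ DJ k ≤ 2 * m * r k ∧ ∀ k' ≤ k, r k' ≤ r k)
    -- (B') with κ = 1/2
    (hBI : ∀ i k', 0 < βI i k' →
      (∀ ℓ ≤ k', r ℓ ≤ DI k' / (2 * m)) ∧
      (∀ k ≤ k', DI k + DJ k ≤ 2 * DI k') ∧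
      (DI k') ^ 2 ≤ 2 * m * FI i k')
    (hBJ : ∀ j k', 0 < βJ j k' →
      (∀ ℓ ≤ k', r ℓ ≤ DJ k' / (2 * m)) ∧
      (∀ k ≤ k', DI k + DJ k ≤ 2 * DJ k') ∧
      (DJ k') ^ 2 ≤ 2 * m * FJ j k')
    -- (C') with a = 1
    (hCb : ∀ k, C k ≤ (Finset.Iic k).sup' Finset.nonempty_Iic r
        + χ * (DI k + DJ k))
    -- (D_R) relaxed tightness, Lemma 21-1
    (hDR : ∀ k, w k ≤ R * (α k
        + ∑ i, ∑ k' ∈ Finset.Ici k, βI i k' * LI i k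
        + ∑ j, ∑ k' ∈ Finset.Ici k, βJ j k' * LJ j k))
    -- (E) weak duality
    (hE : ∑ k, α k * r k + ∑ i, ∑ k, βI i k * FI i k + ∑ j, ∑ k, βJ j k * FJ j k
        ≤ OPT) :
    ∑ k, w k * C k ≤ (4 * R * χ * m + R) * OPT := by
  classical
  have hm0 : (0:ℝ) < m := by linarith
  have hχ0 : (0:ℝ) ≤ χ := by linarith
  have hR0 : (0:ℝ) ≤ R := by linarith
  set K : ℝ := 1 + 4 * χ * m with hKdef
  have hK0 : (0:ℝ) ≤ K := by nlinarith
  -- α term bound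
  have halpha : ∀ k, α k * C k ≤ K * (α k * r k) := by
    intro k
    rcases (hα k).lt_or_eq with hpos | hzero
    · obtain ⟨h1, h2, h3⟩ := hA k hpos
      have hsup : (Finset.Iic k).sup' Finset.nonempty_Iic r ≤ r k := by
        apply Finset.sup'_le
        intro ℓ hℓ
        exact h3 ℓ (Finset.mem_Iic.mp hℓ)
      have hCk : C k ≤ K * r k := by
        have := hCb k
        have : C k ≤ r k + χ * (DI k + DJ k) := by linarith
        nlinarith [hr k]
      calc α k * C k ≤ α k * (K * r k) := by
            exact mul_le_mul_of_nonneg_left hCk (le_of_lt hpos)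
        _ = K * (α k * r k) := by ring
    · rw [← hzero]; ring_nf; nlinarith [hr k, hC k]
  -- βI term bound
  have hbetaI : ∀ i k', βI i k' * (∑ k ∈ Finset.Iic k', LI i k * C k)
      ≤ K * (βI i k' * FI i k') := by
    intro i k'
    rcases (hβI i k').lt_or_eq with hpos | hzero
    · obtain ⟨h1, h2, h3⟩ := hBI i k' hpos
      have hCk : ∀ k ∈ Finset.Iic k', C k ≤ DI k' / (2*m) + 2 * χ * DI k' := by
        intro k hk
        rw [Finset.mem_Iic] at hk
        have hsup : (Finset.Iic k).sup' Finset.nonempty_Iic r ≤ DI k' / (2*m) := by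
          apply Finset.sup'_le
          intro ℓ hℓ
          exact h1 ℓ (le_trans (Finset.mem_Iic.mp hℓ) hk)
        have := hCb k
        have := h2 k hk
        nlinarith
      have hsum : ∑ k ∈ Finset.Iic k', LI i k * C k
          ≤ (DI k' / (2*m) + 2 * χ * DI k') * DI k' := by
        calc ∑ k ∈ Finset.Iic k', LI i k * C k
            ≤ ∑ k ∈ Finset.Iic k', LI i k * (DI k' / (2*m) + 2 * χ * DI k') := by
              apply Finset.sum_le_sum
              intro k hk
              exact mul_le_mul_of_nonneg_left (hCk k hk) (hLI i k)
          _ = (∑ k ∈ Finset.Iic k', LI i k) * (DI k' / (2*m) + 2 * χ * DI k') := by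
              rw [Finset.sum_mul]
          _ ≤ DI k' * (DI k' / (2*m) + 2 * χ * DI k') := by
              apply mul_le_mul_of_nonneg_right (hcumI i k')
              have := hDI k'
              positivity
          _ = (DI k' / (2*m) + 2 * χ * DI k') * DI k' := by ring
      have hF : (DI k' / (2*m) + 2 * χ * DI k') * DI k' ≤ K * FI i k' := by
        have hsq : (DI k')^2 ≤ 2 * m * FI i k' := h3
        have hdiv : DI k' / (2*m) * DI k' = (DI k')^2 / (2*m) := by ring
        have h4 : (DI k')^2 / (2*m) ≤ FI i k' := by
          rw [div_le_iff₀ (by linarith)]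
          linarith [hsq]
        have h5 : 2 * χ * (DI k')^2 ≤ 2 * χ * (2 * m * FI i k') :=
          mul_le_mul_of_nonneg_left hsq (by positivity)
        nlinarith
      calc βI i k' * (∑ k ∈ Finset.Iic k', LI i k * C k)
          ≤ βI i k' * (K * FI i k') :=
            mul_le_mul_of_nonneg_left (le_trans hsum hF) (le_of_lt hpos)
        _ = K * (βI i k' * FI i k') := by ring
    · rw [← hzero]; ring_nf
      nlinarith [hFI i k']
  -- βJ term bound (symmetric)
  have hbetaJ : ∀ j k', βJ j k' * (∑ k ∈ Finset.Iic k', LJ j k * C k)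
      ≤ K * (βJ j k' * FJ j k') := by
    intro j k'
    rcases (hβJ j k').lt_or_eq with hpos | hzero
    · obtain ⟨h1, h2, h3⟩ := hBJ j k' hpos
      have hCk : ∀ k ∈ Finset.Iic k', C k ≤ DJ k' / (2*m) + 2 * χ * DJ k' := by
        intro k hk
        rw [Finset.mem_Iic] at hk
        have hsup : (Finset.Iic k).sup' Finset.nonempty_Iic r ≤ DJ k' / (2*m) := by
          apply Finset.sup'_le
          intro ℓ hℓ
          exact h1 ℓ (le_trans (Finset.mem_Iic.mp hℓ) hk)
        have := hCb k
        have := h2 k hk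
        nlinarith
      have hsum : ∑ k ∈ Finset.Iic k', LJ j k * C k
          ≤ (DJ k' / (2*m) + 2 * χ * DJ k') * DJ k' := by
        calc ∑ k ∈ Finset.Iic k', LJ j k * C k
            ≤ ∑ k ∈ Finset.Iic k', LJ j k * (DJ k' / (2*m) + 2 * χ * DJ k') := by
              apply Finset.sum_le_sum
              intro k hk
              exact mul_le_mul_of_nonneg_left (hCk k hk) (hLJ j k)
          _ = (∑ k ∈ Finset.Iic k', LJ j k) * (DJ k' / (2*m) + 2 * χ * DJ k') := by
              rw [Finset.sum_mul]
          _ ≤ DJ k' * (DJ k' / (2*m) + 2 * χ * DJ k') := by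
              apply mul_le_mul_of_nonneg_right (hcumJ j k')
              have := hDJ k'
              positivity
          _ = (DJ k' / (2*m) + 2 * χ * DJ k') * DJ k' := by ring
      have hF : (DJ k' / (2*m) + 2 * χ * DJ k') * DJ k' ≤ K * FJ j k' := by
        have hsq : (DJ k')^2 ≤ 2 * m * FJ j k' := h3
        have h4 : (DJ k')^2 / (2*m) ≤ FJ j k' := by
          rw [div_le_iff₀ (by linarith)]
          linarith [hsq]
        have hdiv : DJ k' / (2*m) * DJ k' = (DJ k')^2 / (2*m) := by ring
        have h5 : 2 * χ * (DJ k')^2 ≤ 2 * χ * (2 * m * FJ j k') :=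
          mul_le_mul_of_nonneg_left hsq (by positivity)
        nlinarith
      calc βJ j k' * (∑ k ∈ Finset.Iic k', LJ j k * C k)
          ≤ βJ j k' * (K * FJ j k') :=
            mul_le_mul_of_nonneg_left (le_trans hsum hF) (le_of_lt hpos)
        _ = K * (βJ j k' * FJ j k') := by ring
    · rw [← hzero]; ring_nf
      nlinarith [hFJ j k']
  -- Step 1: apply (D_R) pointwise
  have step1 : ∑ k, w k * C k ≤ R * ((∑ k, α k * C k)
      + (∑ k, (∑ i, ∑ k' ∈ Finset.Ici k, βI i k' * LI i k) * C k)
      + (∑ k, (∑ j, ∑ k' ∈ Finset.Ici k, βJ j k' * LJ j k) * C k)) := by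
    have : ∑ k, w k * C k ≤ ∑ k, R * (α k
        + ∑ i, ∑ k' ∈ Finset.Ici k, βI i k' * LI i k
        + ∑ j, ∑ k' ∈ Finset.Ici k, βJ j k' * LJ j k) * C k := by
      apply Finset.sum_le_sum
      intro k _
      exact mul_le_mul_of_nonneg_right (hDR k) (hC k)
    refine le_trans this (le_of_eq ?_)
    rw [mul_add, mul_add, Finset.mul_sum, Finset.mul_sum, Finset.mul_sum,
      ← Finset.sum_add_distrib, ← Finset.sum_add_distrib]
    apply Finset.sum_congr rfl
    intro k _
    ring
  -- Step 2: swap sums for the β terms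
  have swapI : ∑ k, (∑ i, ∑ k' ∈ Finset.Ici k, βI i k' * LI i k) * C k
      = ∑ i, ∑ k', βI i k' * (∑ k ∈ Finset.Iic k', LI i k * C k) := by
    have e1 : ∀ k : Fin n, (∑ i, ∑ k' ∈ Finset.Ici k, βI i k' * LI i k) * C k
        = ∑ i, ∑ k' ∈ Finset.Ici k, βI i k' * (LI i k * C k) := by
      intro k
      rw [Finset.sum_mul]
      apply Finset.sum_congr rfl
      intro i _
      rw [Finset.sum_mul]
      apply Finset.sum_congr rfl
      intro k' _
      ring
    calc ∑ k, (∑ i, ∑ k' ∈ Finset.Ici k, βI i k' * LI i k) * C k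
        = ∑ k, ∑ i, ∑ k' ∈ Finset.Ici k, βI i k' * (LI i k * C k) := by
          exact Finset.sum_congr rfl fun k _ => e1 k
      _ = ∑ i, ∑ k : Fin n, ∑ k' ∈ Finset.Ici k, βI i k' * (LI i k * C k) :=
          Finset.sum_comm
      _ = ∑ i, ∑ k', βI i k' * (∑ k ∈ Finset.Iic k', LI i k * C k) := by
          apply Finset.sum_congr rfl
          intro i _
          rw [Finset.sum_comm' (t' := (Finset.univ : Finset (Fin n)))
            (s' := fun k' => Finset.Iic k')
            (fun k k' => by simp [Finset.mem_Ici, Finset.mem_Iic])]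
          apply Finset.sum_congr rfl
          intro k' _
          rw [Finset.mul_sum]
  have swapJ : ∑ k, (∑ j, ∑ k' ∈ Finset.Ici k, βJ j k' * LJ j k) * C k
      = ∑ j, ∑ k', βJ j k' * (∑ k ∈ Finset.Iic k', LJ j k * C k) := by
    have e1 : ∀ k : Fin n, (∑ j, ∑ k' ∈ Finset.Ici k, βJ j k' * LJ j k) * C k
        = ∑ j, ∑ k' ∈ Finset.Ici k, βJ j k' * (LJ j k * C k) := by
      intro k
      rw [Finset.sum_mul]
      apply Finset.sum_congr rfl
      intro j _
      rw [Finset.sum_mul]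
      apply Finset.sum_congr rfl
      intro k' _
      ring
    calc ∑ k, (∑ j, ∑ k' ∈ Finset.Ici k, βJ j k' * LJ j k) * C k
        = ∑ k, ∑ j, ∑ k' ∈ Finset.Ici k, βJ j k' * (LJ j k * C k) := by
          exact Finset.sum_congr rfl fun k _ => e1 k
      _ = ∑ j, ∑ k : Fin n, ∑ k' ∈ Finset.Ici k, βJ j k' * (LJ j k * C k) :=
          Finset.sum_comm
      _ = ∑ j, ∑ k', βJ j k' * (∑ k ∈ Finset.Iic k', LJ j k * C k) := by
          apply Finset.sum_congr rfl
          intro j _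
          rw [Finset.sum_comm' (t' := (Finset.univ : Finset (Fin n)))
            (s' := fun k' => Finset.Iic k')
            (fun k k' => by simp [Finset.mem_Ici, Finset.mem_Iic])]
          apply Finset.sum_congr rfl
          intro k' _
          rw [Finset.mul_sum]
  -- Step 3: combine
  have bndA : ∑ k, α k * C k ≤ K * ∑ k, α k * r k := by
    rw [Finset.mul_sum]
    exact Finset.sum_le_sum fun k _ => halpha k
  have bndI : ∑ i, ∑ k', βI i k' * (∑ k ∈ Finset.Iic k', LI i k * C k)
      ≤ K * ∑ i, ∑ k, βI i k * FI i k := by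
    rw [Finset.mul_sum]
    apply Finset.sum_le_sum
    intro i _
    rw [Finset.mul_sum]
    exact Finset.sum_le_sum fun k' _ => hbetaI i k'
  have bndJ : ∑ j, ∑ k', βJ j k' * (∑ k ∈ Finset.Iic k', LJ j k * C k)
      ≤ K * ∑ j, ∑ k, βJ j k * FJ j k := by
    rw [Finset.mul_sum]
    apply Finset.sum_le_sum
    intro j _
    rw [Finset.mul_sum]
    exact Finset.sum_le_sum fun k' _ => hbetaJ j k'
  have final : ∑ k, w k * C k ≤ R * K * OPT := by
    have h1 : ∑ k, w k * C k ≤ R * (K * (∑ k, α k * r k)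
        + K * (∑ i, ∑ k, βI i k * FI i k) + K * (∑ j, ∑ k, βJ j k * FJ j k)) := by
      refine le_trans step1 (mul_le_mul_of_nonneg_left ?_ hR0)
      rw [swapI, swapJ]
      linarith [bndA, bndI, bndJ]
    have h2 : K * (∑ k, α k * r k) + K * (∑ i, ∑ k, βI i k * FI i k)
        + K * (∑ j, ∑ k, βJ j k * FJ j k) ≤ K * OPT := by
      calc K * (∑ k, α k * r k) + K * (∑ i, ∑ k, βI i k * FI i k)
            + K * (∑ j, ∑ k, βJ j k * FJ j k)
          = K * (∑ k, α k * r k + ∑ i, ∑ k, βI i k * FI i k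
            + ∑ j, ∑ k, βJ j k * FJ j k) := by ring
        _ ≤ K * OPT := mul_le_mul_of_nonneg_left hE hK0
    calc ∑ k, w k * C k ≤ R * (K * OPT) :=
          le_trans h1 (mul_le_mul_of_nonneg_left h2 hR0)
      _ = R * K * OPT := by ring
  have : R * K * OPT = (4 * R * χ * m + R) * OPT := by rw [hKdef]; ring
  linarith [final, this.symm.le]
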